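/- For n ≥ 3 and t ∈ [0,1], the complex number Δₙ = (sin²t + e^{2πi/n} cos²t)ⁿ has modulus cosⁿ(π/n)·secⁿ((θ−π)/n), where θ is the argument of Δₙ determined by tan(θ/n) = sin(2π/n)/(cos(2π/n) + tan²t). In particular, every point of the curve r(θ) = cosⁿ(π/n) secⁿ((θ−π)/n) with cos²t = sin(θ/n)/(2 sin(π/n) cos((θ−π)/n)) ∈ [0,1] is realized. -/

import Mathlib

open Real Complex

theorem stmt_12 (n : ℕ) (hn : 3 ≤ n) (t : ℝ) (ht : t ∈ Set.Icc (0 : ℝ) 1)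
    (θ : ℝ) (hθ : θ ∈ Set.Icc 0 (2 * π))
    (hcos : Real.cos t ^ 2 =
      Real.sin (θ / n) / (2 * Real.sin (π / n) * Real.cos ((θ - π) / n))) :
    let Δ : ℂ := ((Real.sin t : ℂ) ^ 2 +
      Complex.exp (2 * π * Complex.I / n) * (Real.cos t : ℂ) ^ 2) ^ n
    ‖Δ‖ = Real.cos (π / n) ^ n * ((Real.cos ((θ - π) / n))⁻¹) ^ n ∧
      Δ = ((Real.cos (π / n) ^ n * ((Real.cos ((θ - π) / n))⁻¹) ^ n : ℝ) : ℂ) *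
        Complex.exp (θ * Complex.I) := by
  intro Δ
  have hn3 : (3 : ℝ) ≤ (n : ℝ) := by exact_mod_cast hn
  have hnpos : (0 : ℝ) < (n : ℝ) := by linarith
  have hn0 : (n : ℝ) ≠ 0 := ne_of_gt hnpos
  have hπ : (0 : ℝ) < π := Real.pi_pos
  have hπn : 0 < π / n := by positivity
  have hπn2 : π / n < π / 2 := by
    rw [div_lt_div_iff₀ hnpos (by norm_num : (0:ℝ) < 2)]
    nlinarith
  have hS : 0 < Real.sin (π / n) := Real.sin_pos_of_pos_of_lt_pi hπn (by linarith)
  have hC : 0 < Real.cos (π / n) := Real.cos_pos_of_mem_Ioo ⟨by linarith, hπn2⟩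
  have hθ1 : 0 ≤ θ := hθ.1
  have hθ2 : θ ≤ 2 * π := hθ.2
  have hDlt : |(θ - π) / n| < π / 2 := by
    rw [abs_div, abs_of_pos hnpos, div_lt_div_iff₀ hnpos (by norm_num : (0:ℝ) < 2)]
    have habs : |θ - π| ≤ π := abs_le.mpr ⟨by linarith, by linarith⟩
    nlinarith
  have hD : 0 < Real.cos ((θ - π) / n) := by
    apply Real.cos_pos_of_mem_Ioo
    constructor
    · linarith [neg_abs_le ((θ - π) / n), hDlt]
    · linarith [le_abs_self ((θ - π) / n)]
  set D := Real.cos ((θ - π) / n) with hDdef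
  set ρ : ℝ := Real.cos (π / n) / D with hρdef
  have hρpos : 0 < ρ := div_pos hC hD
  have hc : 2 * Real.sin (π / n) * D * Real.cos t ^ 2 = Real.sin (θ / n) := by
    rw [hcos]
    field_simp
  have hDexp : D = Real.cos (θ / n) * Real.cos (π / n) + Real.sin (θ / n) * Real.sin (π / n) := by
    rw [hDdef, show (θ - π) / n = θ / n - π / n by ring, Real.cos_sub]
  have hcos2 : Real.cos (2 * π / n) = 1 - 2 * Real.sin (π / n) ^ 2 := by
    rw [show 2 * π / n = 2 * (π / n) by ring, Real.cos_two_mul]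
    nlinarith [Real.sin_sq_add_cos_sq (π / n)]
  have hsin2 : Real.sin (2 * π / n) = 2 * Real.sin (π / n) * Real.cos (π / n) := by
    rw [show 2 * π / n = 2 * (π / n) by ring, Real.sin_two_mul]
  have hst : Real.sin t ^ 2 = 1 - Real.cos t ^ 2 := by
    nlinarith [Real.sin_sq_add_cos_sq t]
  have hRe : Real.sin t ^ 2 + Real.cos (2 * π / n) * Real.cos t ^ 2 = ρ * Real.cos (θ / n) := by
    rw [hst, hcos2, hρdef]
    rw [div_mul_eq_mul_div, eq_div_iff hD.ne']
    linear_combination hDexp - Real.sin (π / n) * hc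
  have hIm : Real.sin (2 * π / n) * Real.cos t ^ 2 = ρ * Real.sin (θ / n) := by
    rw [hsin2, hρdef]
    rw [div_mul_eq_mul_div, eq_div_iff hD.ne']
    linear_combination Real.cos (π / n) * hc
  have e1 : Complex.exp (2 * π * Complex.I / n) =
      ((Real.cos (2 * π / n) : ℝ) : ℂ) + ((Real.sin (2 * π / n) : ℝ) : ℂ) * Complex.I := by
    rw [show (2 * π * Complex.I / n : ℂ) = ((2 * π / n : ℝ) : ℂ) * Complex.I by push_cast; ring,
      Complex.exp_mul_I, Complex.ofReal_cos, Complex.ofReal_sin]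
  have key : (Real.sin t : ℂ) ^ 2 + Complex.exp (2 * π * Complex.I / n) * (Real.cos t : ℂ) ^ 2 =
      ((ρ : ℝ) : ℂ) * Complex.exp (((θ / n : ℝ) : ℂ) * Complex.I) := by
    rw [e1, Complex.exp_mul_I, ← Complex.ofReal_cos, ← Complex.ofReal_sin]
    have hReC : ((Real.sin t : ℂ)) ^ 2 + ((Real.cos (2 * π / n) : ℝ) : ℂ) * (Real.cos t : ℂ) ^ 2
        = ((ρ : ℝ) : ℂ) * ((Real.cos (θ / n) : ℝ) : ℂ) := by exact_mod_cast hRe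
    have hImC : ((Real.sin (2 * π / n) : ℝ) : ℂ) * (Real.cos t : ℂ) ^ 2
        = ((ρ : ℝ) : ℂ) * ((Real.sin (θ / n) : ℝ) : ℂ) := by exact_mod_cast hIm
    linear_combination hReC + Complex.I * hImC
  have hΔ : Δ = ((ρ ^ n : ℝ) : ℂ) * Complex.exp ((θ : ℂ) * Complex.I) := by
    show ((Real.sin t : ℂ) ^ 2 + Complex.exp (2 * π * Complex.I / n) * (Real.cos t : ℂ) ^ 2) ^ n
      = _
    rw [key, mul_pow, ← Complex.exp_nat_mul]
    congr 1
    · push_cast; ring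
    · congr 1
      have hnC : (n : ℂ) ≠ 0 := Nat.cast_ne_zero.mpr (by omega)
      push_cast
      field_simp
  have hρn : ρ ^ n = Real.cos (π / n) ^ n * (D⁻¹) ^ n := by
    rw [hρdef, div_pow, div_eq_mul_inv, inv_pow]
  constructor
  · rw [show Δ = _ from hΔ]
    rw [norm_mul, Complex.norm_real, Real.norm_eq_abs, Complex.norm_exp_ofReal_mul_I, mul_one,
      abs_of_pos (pow_pos hρpos n), hρn]
  · rw [hΔ, hρn]
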